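/- Let k and M be positive integers, and let M = p_1^{e_1} p_2^{e_2} ⋯ p_l^{e_l} be the prime factorization of M into distinct primes p_1, …, p_l. For any integer n ≥ max{e_j : 1 ≤ j ≤ l}, we have Σ_{i=0}^{φ(M)-1} B_k^{(-(n+i))} ≡ 0 (mod M). -/
import Mathlib

/-- Stirling numbers of the second kind. -/
def stirling2 : ℕ → ℕ → ℕ
  | 0, 0 => 1
  | 0, _ + 1 => 0
  | _ + 1, 0 => 0
  | n + 1, m + 1 => (m + 1) * stirling2 n (m + 1) + stirling2 n m

/-- The poly-Bernoulli number `B_n^{(-k)}` with negative upper index `-k`. -/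
def polyBernoulliB (k n : ℕ) : ℤ :=
  (-1 : ℤ) ^ n * ∑ m ∈ Finset.range (n + 1),
    (-1 : ℤ) ^ m * (m.factorial : ℤ) * (stirling2 n m : ℤ) * ((m : ℤ) + 1) ^ k

/-- The poly-Bernoulli number of type C, `C_n^{(-k)}`, with negative upper index `-k`. -/
def polyBernoulliC (k n : ℕ) : ℤ :=
  (-1 : ℤ) ^ n * ∑ m ∈ Finset.range (n + 1),
    (-1 : ℤ) ^ m * (m.factorial : ℤ) * (stirling2 (n + 1) (m + 1) : ℤ) * ((m : ℤ) + 1) ^ k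

lemma key_dvd_nat (M x n : ℕ) (hM : 0 < M) (hn : ∀ q : ℕ, M.factorization q ≤ n)
    (hx : 0 < x) : M ∣ x ^ n * (x ^ M.totient - 1) := by
  rw [Nat.dvd_iff_prime_pow_dvd_dvd]
  intro p j hpp hpj
  have hp := hpp
  have hple : j ≤ M.factorization p :=
    (hp.pow_dvd_iff_le_factorization hM.ne').mp hpj
  by_cases hpx : p ∣ x
  · refine Dvd.dvd.mul_right ?_ _
    calc (p:ℕ) ^ j ∣ x ^ j := pow_dvd_pow_of_dvd hpx j
    _ ∣ x ^ n := pow_dvd_pow x (hple.trans (hn p))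
  · refine Dvd.dvd.mul_left ?_ _
    have hco : Nat.Coprime x (p ^ j) :=
      Nat.Coprime.pow_right j ((hp.coprime_iff_not_dvd.mpr hpx).symm)
    have h1 : x ^ (p ^ j).totient ≡ 1 [MOD p ^ j] := Nat.ModEq.pow_totient hco
    have hd : (p ^ j).totient ∣ M.totient := Nat.totient_dvd_of_dvd hpj
    obtain ⟨t, ht⟩ := hd
    have h2 : x ^ M.totient ≡ 1 [MOD p ^ j] := by
      rw [ht, pow_mul]
      calc (x ^ (p^j).totient) ^ t ≡ 1 ^ t [MOD p ^ j] := h1.pow t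
      _ = 1 := one_pow t
    exact (Nat.modEq_iff_dvd' (Nat.one_le_pow _ _ hx)).mp h2.symm

lemma term_dvd (k M n : ℕ) (hk : 0 < k) (hM : 0 < M)
    (hn : ∀ q : ℕ, M.factorization q ≤ n) (m : ℕ) :
    (M : ℤ) ∣ (m.factorial : ℤ) * (stirling2 k m : ℤ) *
      ∑ i ∈ Finset.range M.totient, ((m : ℤ) + 1) ^ (n + i) := by
  match m with
  | 0 =>
    obtain ⟨k', rfl⟩ := Nat.exists_eq_add_of_lt hk
    have : stirling2 (0 + k' + 1) 0 = 0 := by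
      show stirling2 (k' + 1) 0 = 0
      rfl
    rw [this]
    simp
  | m + 1 =>
    set x : ℤ := (m : ℤ) + 1 + 1 with hxdef
    have hfac : ((m + 1).factorial : ℤ) = ((m : ℤ) + 1) * (m.factorial : ℤ) := by
      push_cast [Nat.factorial_succ]; ring
    have hgeom : (∑ i ∈ Finset.range M.totient, x ^ i) * (x - 1) = x ^ M.totient - 1 :=
      geom_sum_mul x M.totient
    have hkey : (M : ℤ) ∣ x ^ n * (x ^ M.totient - 1) := by
      have := key_dvd_nat M (m + 2) n hM hn (by omega)
      have hcast : ((((m+2) ^ n * ((m+2) ^ M.totient - 1) : ℕ)) : ℤ)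
          = x ^ n * (x ^ M.totient - 1) := by
        have h1 : 1 ≤ (m+2) ^ M.totient := Nat.one_le_pow _ _ (by omega)
        push_cast [Nat.cast_sub h1]
        ring
      exact hcast ▸ Int.natCast_dvd_natCast.mpr this
    have heq : ((m+1).factorial : ℤ) * (stirling2 k (m+1) : ℤ) *
        ∑ i ∈ Finset.range M.totient, ((m : ℤ) + 1 + 1) ^ (n + i)
        = (m.factorial : ℤ) * (stirling2 k (m+1) : ℤ) * (x ^ n * (x ^ M.totient - 1)) := by
      rw [hfac, ← hgeom]
      have : ∑ i ∈ Finset.range M.totient, ((m : ℤ) + 1 + 1) ^ (n + i)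
          = x ^ n * ∑ i ∈ Finset.range M.totient, x ^ i := by
        rw [Finset.mul_sum]
        exact Finset.sum_congr rfl fun i _ => by rw [pow_add]
      rw [this]
      have hx1 : ((m : ℤ) + 1) = x - 1 := by rw [hxdef]; ring
      rw [hx1]; ring
    push_cast at heq ⊢
    rw [heq]
    exact Dvd.dvd.mul_left hkey _

theorem polyBernoulliB_sum_period_upper_general (k M : ℕ) (hk : 0 < k) (hM : 0 < M)
    (n : ℕ) (hn : ∀ q : ℕ, M.factorization q ≤ n) :
    (∑ i ∈ Finset.range M.totient, polyBernoulliB (n + i) k)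
      ≡ 0 [ZMOD (M : ℤ)] := by
  have h1 : ∀ i, polyBernoulliB (n + i) k
      = ∑ m ∈ Finset.range (k + 1),
        ((-1 : ℤ) ^ k * (-1) ^ m) *
          ((m.factorial : ℤ) * (stirling2 k m : ℤ) * ((m : ℤ) + 1) ^ (n + i)) := by
    intro i
    unfold polyBernoulliB
    rw [Finset.mul_sum]
    exact Finset.sum_congr rfl fun m _ => by ring
  have h2 : (∑ i ∈ Finset.range M.totient, polyBernoulliB (n + i) k)
      = ∑ m ∈ Finset.range (k + 1),
        ((-1 : ℤ) ^ k * (-1) ^ m) *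
          ((m.factorial : ℤ) * (stirling2 k m : ℤ) *
            ∑ i ∈ Finset.range M.totient, ((m : ℤ) + 1) ^ (n + i)) := by
    simp_rw [h1]
    rw [Finset.sum_comm]
    exact Finset.sum_congr rfl fun m _ => by rw [Finset.mul_sum, Finset.mul_sum]
  rw [Int.modEq_zero_iff_dvd, h2]
  exact Finset.dvd_sum fun m _ => Dvd.dvd.mul_left (term_dvd k M n hk hM hn m) _
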